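/- arXiv:1412.1110 — 2 statements merged into one kernel-verified Lean document; each statement's English description precedes it below -/
import Mathlib

section
/- For all integers m, n, k ≥ 1: C(m+n-k, k-1) = Σ_{i=0}^{n} Σ_{j=0}^{m} β_{i,j} · (-1)^{(i+1)(j+1)} · C(n,i) · C(m-⌈j/2⌉, m-j) · C(i-k+⌊j/2⌋, i-2k+j+1), where β_{i,j} = χ(j is even) + χ(j is odd and i = n). -/
open Finset

/-- Binomial coefficient with integer arguments: C(a,0) = 1 for every integer a, and
C(a,b) = 0 whenever b < 0 or 0 ≤ b ≤ a fails (for b > 0). -/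
def C (a b : ℤ) : ℤ :=
  if b = 0 then 1 else if 0 ≤ b ∧ b ≤ a then (a.toNat.choose b.toNat : ℤ) else 0

lemma C_neg {a b : ℤ} (h : b < 0) : C a b = 0 := by
  simp only [C]; rw [if_neg (by omega), if_neg (by omega)]

lemma C_lt {a b : ℤ} (hb : 0 < b) (h : a < b) : C a b = 0 := by
  simp only [C]; rw [if_neg (by omega), if_neg (by omega)]

lemma C_nonneg {a b : ℤ} (ha : 0 ≤ a) (hb : 0 ≤ b) :
    C a b = (a.toNat.choose b.toNat : ℤ) := by
  simp only [C]
  by_cases h0 : b = 0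
  · simp [h0]
  · rw [if_neg h0]
    by_cases h1 : b ≤ a
    · rw [if_pos ⟨hb, h1⟩]
    · rw [if_neg (by tauto), Nat.choose_eq_zero_of_lt (by omega)]
      simp

lemma C_pascal {a b : ℤ} (h : b = 1 → 1 ≤ a) :
    C a b = C (a-1) (b-1) + C (a-1) b := by
  rcases lt_trichotomy b 0 with hb | hb | hb
  · rw [C_neg hb, C_neg (by omega), C_neg hb]; ring
  · subst hb; simp [C]
  · by_cases ha : a ≤ 0
    · have hb2 : 2 ≤ b := by
        rcases eq_or_lt_of_le (by omega : (1:ℤ) ≤ b) with h1 | h1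
        · exact absurd (h h1.symm) (by omega)
        · omega
      rw [C_lt hb (by omega), C_lt (by omega) (by omega), C_lt hb (by omega)]
      ring
    · push_neg at ha
      rw [C_nonneg (by omega) (by omega), C_nonneg (by omega) (by omega),
        C_nonneg (by omega) (by omega)]
      have h1 : a.toNat = (a-1).toNat + 1 := by omega
      have h2 : b.toNat = (b-1).toNat + 1 := by omega
      rw [h1, h2, Nat.choose_succ_succ']
      push_cast
      ring

def A (m : ℕ) (i k : ℤ) : ℤ :=
  ∑ t ∈ range (m+1), C ((m:ℤ) - t) ((m:ℤ) - 2*t) * C (i - k + t) (i - 2*k + 2*t + 1)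

lemma A_rec_m (m : ℕ) (i k : ℤ) : A (m+2) i k = A (m+1) i k + A m i (k-1) := by
  have step : ∀ t : ℕ, C ((m:ℤ)+2 - t) ((m:ℤ)+2 - 2*t)
      = C ((m:ℤ)+1 - t) ((m:ℤ)+1 - 2*t) + C ((m:ℤ)+1 - t) ((m:ℤ)+2 - 2*t) := by
    intro t
    have := C_pascal (a := (m:ℤ)+2 - t) (b := (m:ℤ)+2 - 2*t) (by intro h; omega)
    convert this using 3 <;> ring
  unfold A
  push_cast
  calc ∑ t ∈ range (m+3), C ((m:ℤ)+2 - t) ((m:ℤ)+2 - 2*t) * C (i - k + t) (i - 2*k + 2*t + 1)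
      = ∑ t ∈ range (m+3), (C ((m:ℤ)+1 - t) ((m:ℤ)+1 - 2*t) * C (i - k + t) (i - 2*k + 2*t + 1)
        + C ((m:ℤ)+1 - t) ((m:ℤ)+2 - 2*t) * C (i - k + t) (i - 2*k + 2*t + 1)) := by
        refine Finset.sum_congr rfl fun t _ => ?_
        rw [step t]; ring
    _ = (∑ t ∈ range (m+3), C ((m:ℤ)+1 - t) ((m:ℤ)+1 - 2*t) * C (i - k + t) (i - 2*k + 2*t + 1))
        + ∑ t ∈ range (m+3), C ((m:ℤ)+1 - t) ((m:ℤ)+2 - 2*t) * C (i - k + t) (i - 2*k + 2*t + 1) :=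
        Finset.sum_add_distrib
    _ = (∑ t ∈ range (m+2), C ((m:ℤ)+1 - t) ((m:ℤ)+1 - 2*t) * C (i - k + t) (i - 2*k + 2*t + 1))
        + ∑ t ∈ range (m+1), C ((m:ℤ) - t) ((m:ℤ) - 2*t) * C (i - (k-1) + t) (i - 2*(k-1) + 2*t + 1) := by
        rw [Finset.sum_range_succ (n := m+2), Finset.sum_range_succ' _ (m+2),
          Finset.sum_range_succ (n := m+1)]
        have h1 : C ((m:ℤ)+1 - ((m+2:ℕ):ℤ)) ((m:ℤ)+1 - 2*((m+2:ℕ):ℤ)) = 0 :=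
          C_neg (by push_cast; omega)
        have h2 : C ((m:ℤ)+1 - ((0:ℕ):ℤ)) ((m:ℤ)+2 - 2*((0:ℕ):ℤ)) = 0 :=
          C_lt (by push_cast; omega) (by push_cast; omega)
        have h5 : ∑ x ∈ range (m+2),
            C ((m:ℤ)+1 - ((x+1:ℕ):ℤ)) ((m:ℤ)+2 - 2*((x+1:ℕ):ℤ)) *
              C (i - k + ((x+1:ℕ):ℤ)) (i - 2*k + 2*((x+1:ℕ):ℤ) + 1)
            = ∑ t ∈ range (m+1), C ((m:ℤ) - t) ((m:ℤ) - 2*t) *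
              C (i - (k-1) + t) (i - 2*(k-1) + 2*t + 1) := by
          rw [Finset.sum_range_succ]
          have hz : C ((m:ℤ)+1 - ((m+1+1:ℕ):ℤ)) ((m:ℤ)+2 - 2*((m+1+1:ℕ):ℤ)) = 0 :=
            C_neg (by push_cast; omega)
          rw [hz, zero_mul, add_zero]
          refine Finset.sum_congr rfl fun t _ => ?_
          congr 1 <;> congr 1 <;> push_cast <;> ring
        simp only [h1, h2, zero_mul, mul_zero, add_zero, zero_add]
        rw [h5]

lemma A_rec_i (m : ℕ) {i : ℤ} (k : ℤ) (hi : 1 ≤ i) :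
    A m i k = A m (i-1) k + A m (i-2) (k-1) := by
  unfold A
  rw [← Finset.sum_add_distrib]
  refine Finset.sum_congr rfl fun t _ => ?_
  have := C_pascal (a := i - k + t) (b := i - 2*k + 2*t + 1) (by intro h; omega)
  rw [show i - 1 - k + (t:ℤ) = i - k + t - 1 by ring,
      show i - 1 - 2*k + 2*(t:ℤ) + 1 = i - 2*k + 2*t + 1 - 1 by ring,
      show i - 2 - (k-1) + (t:ℤ) = i - k + t - 1 by ring,
      show i - 2 - 2*(k-1) + 2*(t:ℤ) + 1 = i - 2*k + 2*t + 1 by ring,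
      ← mul_add, ← this]

def T (n : ℕ) (f : ℕ → ℤ) : ℤ := ∑ i ∈ range (n+1), (-1)^(i+1) * (n.choose i : ℤ) * f i

lemma T_add (n : ℕ) (f g : ℕ → ℤ) :
    T n (fun i => f i + g i) = T n f + T n g := by
  unfold T
  rw [← Finset.sum_add_distrib]
  exact Finset.sum_congr rfl fun i _ => by ring

lemma T_rec (n : ℕ) (f : ℕ → ℤ) :
    T (n+1) f = T n f - T n (fun i => f (i+1)) := by
  unfold T
  rw [Finset.sum_range_succ' _ (n+1)]
  have h1 : ∀ i ∈ range (n+1), (-1:ℤ)^(i+1+1) * ((n+1).choose (i+1) : ℤ) * f (i+1)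
      = -((-1)^(i+1) * (n.choose i : ℤ) * f (i+1)) + (-1)^(i+1+1) * (n.choose (i+1) : ℤ) * f (i+1) := by
    intro i _
    rw [Nat.choose_succ_succ]
    push_cast
    ring
  rw [Finset.sum_congr rfl h1, Finset.sum_add_distrib]
  have h2 : ∑ i ∈ range (n+1), (-1:ℤ)^(i+1+1) * (n.choose (i+1) : ℤ) * f (i+1)
      = ∑ j ∈ range (n+2), (-1:ℤ)^(j+1) * (n.choose j : ℤ) * f j
        - (-1:ℤ)^(0+1) * (n.choose 0 : ℤ) * f 0 := by
    rw [Finset.sum_range_succ' (fun j => (-1:ℤ)^(j+1) * (n.choose j : ℤ) * f j) (n+1)]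
    push_cast
    ring
  rw [h2, Finset.sum_range_succ (fun j => (-1:ℤ)^(j+1) * (n.choose j : ℤ) * f j) (n+1),
    Nat.choose_succ_self]
  simp only [Nat.choose_zero_right, Nat.cast_one, Nat.cast_zero, Finset.sum_neg_distrib]
  push_cast
  ring

def D0 (m n : ℕ) (k : ℤ) : ℤ := T n (fun i => A m i k)
def D1 (m n : ℕ) (k : ℤ) : ℤ := T n (fun i => A m ((i:ℤ)-1) k)

lemma D0_succ (m n : ℕ) (k : ℤ) : D0 m (n+1) k = - D1 m n (k-1) := by
  unfold D0 D1
  rw [T_rec]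
  have h : ∀ i : ℕ, A m ((i+1:ℕ):ℤ) k = A m i k + A m ((i:ℤ)-1) (k-1) := by
    intro i
    have := A_rec_i m (i := ((i:ℤ)+1)) k (by omega)
    push_cast
    rw [show ((i:ℤ)+1) - 1 = (i:ℤ) by ring, show ((i:ℤ)+1) - 2 = (i:ℤ)-1 by ring] at this
    exact this
  have : T n (fun i => A m ((i+1:ℕ):ℤ) k) = T n (fun i => A m i k) + T n (fun i => A m ((i:ℤ)-1) (k-1)) := by
    rw [← T_add]
    unfold T
    exact Finset.sum_congr rfl fun i _ => by simp only [h i]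
  push_cast at this ⊢
  rw [this]
  ring

lemma D1_succ (m n : ℕ) (k : ℤ) : D1 m (n+1) k = D1 m n k - D0 m n k := by
  unfold D0 D1
  rw [T_rec]
  congr 1
  unfold T
  refine Finset.sum_congr rfl fun i _ => ?_
  congr 1
  push_cast
  ring_nf

lemma D0_rec_n (m n : ℕ) (k : ℤ) : D0 m (n+2) k = D0 m (n+1) k + D0 m n (k-1) := by
  rw [show n+2 = (n+1)+1 from rfl, D0_succ, D1_succ, D0_succ]
  ring

lemma D0_rec_m (m n : ℕ) (k : ℤ) : D0 (m+2) n k = D0 (m+1) n k + D0 m n (k-1) := by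
  unfold D0
  rw [← T_add]
  unfold T
  exact Finset.sum_congr rfl fun i _ => by simp only [A_rec_m]

lemma A_vanish_neg (m : ℕ) (i k : ℤ) (h : ∀ t : ℕ, t ≤ m → i - 2*k + 2*t + 1 < 0) :
    A m i k = 0 := by
  unfold A
  refine Finset.sum_eq_zero fun t ht => ?_
  rw [C_neg (h t (Nat.lt_succ_iff.mp (Finset.mem_range.mp ht))), mul_zero]

lemma A_vanish_lt (m : ℕ) (i k : ℤ)
    (h : ∀ t : ℕ, t ≤ m → 0 < i - 2*k + 2*t + 1 ∧ i - k + t < i - 2*k + 2*t + 1) :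
    A m i k = 0 := by
  unfold A
  refine Finset.sum_eq_zero fun t ht => ?_
  obtain ⟨h1, h2⟩ := h t (Nat.lt_succ_iff.mp (Finset.mem_range.mp ht))
  rw [C_lt h1 h2, mul_zero]

lemma key : ∀ k m n : ℕ, 1 ≤ m → 1 ≤ n →
    A (m-1) ((n:ℤ)-1) ((k:ℤ)-1) + D0 m n (k:ℤ) = C ((m:ℤ)+n-k) ((k:ℤ)-1) := by
  intro k
  induction k using Nat.strong_induction_on with
  | _ k ihk =>
    rcases Nat.eq_zero_or_pos k with hk0 | hk1
    · -- k = 0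
      subst hk0
      intro m n hm hn
      have h1 : A (m-1) ((n:ℤ)-1) (((0:ℕ):ℤ)-1) = 0 := by
        refine A_vanish_lt _ _ _ fun t ht => ?_
        constructor <;> push_cast <;> omega
      have h2 : D0 m n ((0:ℕ):ℤ) = 0 := by
        unfold D0 T
        refine Finset.sum_eq_zero fun i hi => ?_
        have : A m (i:ℤ) ((0:ℕ):ℤ) = 0 := by
          refine A_vanish_lt _ _ _ fun t ht => ?_
          constructor <;> push_cast <;> omega
        simp only [this, mul_zero]
      rw [h1, h2, C_neg (show ((0:ℕ):ℤ)-1 < 0 by omega)]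
      norm_num
    · -- k ≥ 1 : induction on m+n
      have H : ∀ s m n : ℕ, m + n ≤ s → 1 ≤ m → 1 ≤ n →
          A (m-1) ((n:ℤ)-1) ((k:ℤ)-1) + D0 m n (k:ℤ) = C ((m:ℤ)+n-k) ((k:ℤ)-1) := by
        intro s
        induction s with
        | zero => intro m n h hm hn; omega
        | succ s ihs =>
          intro m n hmn hm hn
          by_cases hm3 : 3 ≤ m
          · -- R1
            obtain ⟨m', rfl⟩ : ∃ m', m = m' + 3 := ⟨m - 3, by omega⟩
            have e1 : A (m'+1) ((n:ℤ)-1) ((k:ℤ)-1) + D0 (m'+2) n (k:ℤ)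
                = C (((m'+2:ℕ):ℤ)+n-k) ((k:ℤ)-1) := ihs (m'+2) n (by omega) (by omega) hn
            have e2' := ihk (k-1) (by omega) (m'+1) n (by omega) hn
            have hcast : ((k-1:ℕ):ℤ) = (k:ℤ)-1 := by omega
            rw [hcast] at e2'
            have e2 : A m' ((n:ℤ)-1) ((k:ℤ)-1-1) + D0 (m'+1) n ((k:ℤ)-1)
                = C (((m'+1:ℕ):ℤ)+n-((k:ℤ)-1)) ((k:ℤ)-1-1) := e2'
            have hA : A (m'+2) ((n:ℤ)-1) ((k:ℤ)-1)
                = A (m'+1) ((n:ℤ)-1) ((k:ℤ)-1) + A m' ((n:ℤ)-1) ((k:ℤ)-1-1) :=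
              A_rec_m m' _ _
            have hD : D0 (m'+3) n (k:ℤ) = D0 (m'+2) n (k:ℤ) + D0 (m'+1) n ((k:ℤ)-1) :=
              D0_rec_m (m'+1) n (k:ℤ)
            have hP : C (((m'+3:ℕ):ℤ)+n-k) ((k:ℤ)-1)
                = C ((((m'+3:ℕ):ℤ)+n-k)-1) (((k:ℤ)-1)-1) + C ((((m'+3:ℕ):ℤ)+n-k)-1) ((k:ℤ)-1) :=
              C_pascal (by intro h; push_cast; omega)
            have c1 : C (((m'+2:ℕ):ℤ)+n-k) ((k:ℤ)-1)
                = C ((((m'+3:ℕ):ℤ)+n-k)-1) ((k:ℤ)-1) := by congr 1; push_cast; ring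
            have c2 : C (((m'+1:ℕ):ℤ)+n-((k:ℤ)-1)) ((k:ℤ)-1-1)
                = C ((((m'+3:ℕ):ℤ)+n-k)-1) (((k:ℤ)-1)-1) := by congr 1; push_cast; ring
            rw [c1] at e1
            rw [c2] at e2
            show A (m'+2) ((n:ℤ)-1) ((k:ℤ)-1) + D0 (m'+3) n (k:ℤ) = C (((m'+3:ℕ):ℤ)+n-k) ((k:ℤ)-1)
            rw [hA, hD, hP]
            linarith
          · by_cases hn3 : 3 ≤ n
            · -- R2
              obtain ⟨n', rfl⟩ : ∃ n', n = n' + 3 := ⟨n - 3, by omega⟩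
              have e1 : A (m-1) (((n'+2:ℕ):ℤ)-1) ((k:ℤ)-1) + D0 m (n'+2) (k:ℤ)
                  = C ((m:ℤ)+((n'+2:ℕ):ℤ)-k) ((k:ℤ)-1) := ihs m (n'+2) (by omega) hm (by omega)
              have e2' := ihk (k-1) (by omega) m (n'+1) hm (by omega)
              have hcast : ((k-1:ℕ):ℤ) = (k:ℤ)-1 := by omega
              rw [hcast] at e2'
              have e2 : A (m-1) (((n'+1:ℕ):ℤ)-1) ((k:ℤ)-1-1) + D0 m (n'+1) ((k:ℤ)-1)
                  = C ((m:ℤ)+((n'+1:ℕ):ℤ)-((k:ℤ)-1)) ((k:ℤ)-1-1) := e2'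
              have hA : A (m-1) (((n'+3:ℕ):ℤ)-1) ((k:ℤ)-1)
                  = A (m-1) ((((n'+3:ℕ):ℤ)-1)-1) ((k:ℤ)-1)
                    + A (m-1) ((((n'+3:ℕ):ℤ)-1)-2) ((k:ℤ)-1-1) :=
                A_rec_i (m-1) _ (by push_cast; omega)
              have cA1 : A (m-1) ((((n'+3:ℕ):ℤ)-1)-1) ((k:ℤ)-1)
                  = A (m-1) (((n'+2:ℕ):ℤ)-1) ((k:ℤ)-1) := by congr 1; push_cast; ring
              have cA2 : A (m-1) ((((n'+3:ℕ):ℤ)-1)-2) ((k:ℤ)-1-1)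
                  = A (m-1) (((n'+1:ℕ):ℤ)-1) ((k:ℤ)-1-1) := by congr 1; push_cast; ring
              have hD : D0 m (n'+3) (k:ℤ) = D0 m (n'+2) (k:ℤ) + D0 m (n'+1) ((k:ℤ)-1) :=
                D0_rec_n m (n'+1) (k:ℤ)
              have hP : C ((m:ℤ)+((n'+3:ℕ):ℤ)-k) ((k:ℤ)-1)
                  = C (((m:ℤ)+((n'+3:ℕ):ℤ)-k)-1) (((k:ℤ)-1)-1)
                    + C (((m:ℤ)+((n'+3:ℕ):ℤ)-k)-1) ((k:ℤ)-1) :=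
                C_pascal (by intro h; push_cast; omega)
              have c1 : C ((m:ℤ)+((n'+2:ℕ):ℤ)-k) ((k:ℤ)-1)
                  = C (((m:ℤ)+((n'+3:ℕ):ℤ)-k)-1) ((k:ℤ)-1) := by congr 1; push_cast; ring
              have c2 : C ((m:ℤ)+((n'+1:ℕ):ℤ)-((k:ℤ)-1)) ((k:ℤ)-1-1)
                  = C (((m:ℤ)+((n'+3:ℕ):ℤ)-k)-1) (((k:ℤ)-1)-1) := by congr 1; push_cast; ring
              rw [c1] at e1
              rw [c2] at e2
              rw [hA, cA1, cA2, hD, hP]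
              linarith
            · -- m ≤ 2, n ≤ 2
              by_cases hk4 : 4 ≤ k
              · have h1 : A (m-1) ((n:ℤ)-1) ((k:ℤ)-1) = 0 := by
                  refine A_vanish_neg _ _ _ fun t ht => ?_
                  omega
                have h2 : D0 m n (k:ℤ) = 0 := by
                  unfold D0 T
                  refine Finset.sum_eq_zero fun i hi => ?_
                  have hi2 : i ≤ n := Nat.lt_succ_iff.mp (Finset.mem_range.mp hi)
                  have : A m (i:ℤ) (k:ℤ) = 0 := by
                    refine A_vanish_neg _ _ _ fun t ht => ?_
                    omega
                  simp only [this, mul_zero]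
                rw [h1, h2, C_lt (by omega) (by omega)]
                ring
              · interval_cases m <;> interval_cases n <;> interval_cases k <;> decide
      intro m n hm hn
      exact H (m+n) m n le_rfl hm hn

lemma sum_range_double (N : ℕ) (f : ℕ → ℤ) :
    ∑ j ∈ range (2*N), f j = ∑ t ∈ range N, (f (2*t) + f (2*t+1)) := by
  induction N with
  | zero => simp
  | succ N ih =>
    rw [Finset.sum_range_succ, ← ih, show 2*(N+1) = (2*N+1)+1 by ring,
      Finset.sum_range_succ, Finset.sum_range_succ]
    ring_nf

lemma reorg (m n k : ℕ) (hm : 1 ≤ m) :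
    (∑ i ∈ range (n + 1), ∑ j ∈ range (m + 1),
        ((if Even j then 1 else 0) + (if Odd j ∧ i = n then 1 else 0) : ℤ) *
          (-1) ^ ((i + 1) * (j + 1)) * (n.choose i : ℤ) *
          C ((m : ℤ) - ((j : ℤ) + 1) / 2) ((m : ℤ) - j) *
          C ((i : ℤ) - k + (j : ℤ) / 2) ((i : ℤ) - 2 * k + j + 1))
      = A (m-1) ((n:ℤ)-1) ((k:ℤ)-1) + D0 m n (k:ℤ) := by
  have inner : ∀ i ∈ range (n+1), (∑ j ∈ range (m + 1),
        ((if Even j then 1 else 0) + (if Odd j ∧ i = n then 1 else 0) : ℤ) *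
          (-1) ^ ((i + 1) * (j + 1)) * (n.choose i : ℤ) *
          C ((m : ℤ) - ((j : ℤ) + 1) / 2) ((m : ℤ) - j) *
          C ((i : ℤ) - k + (j : ℤ) / 2) ((i : ℤ) - 2 * k + j + 1))
      = (-1)^(i+1) * (n.choose i : ℤ) * A m (i:ℤ) (k:ℤ)
        + (if i = n then A (m-1) ((n:ℤ)-1) ((k:ℤ)-1) else 0) := by
    intro i _
    have pad : (∑ j ∈ range (m + 1),
        ((if Even j then 1 else 0) + (if Odd j ∧ i = n then 1 else 0) : ℤ) *
          (-1) ^ ((i + 1) * (j + 1)) * (n.choose i : ℤ) *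
          C ((m : ℤ) - ((j : ℤ) + 1) / 2) ((m : ℤ) - j) *
          C ((i : ℤ) - k + (j : ℤ) / 2) ((i : ℤ) - 2 * k + j + 1))
        = ∑ j ∈ range (2*(m+1)),
        ((if Even j then 1 else 0) + (if Odd j ∧ i = n then 1 else 0) : ℤ) *
          (-1) ^ ((i + 1) * (j + 1)) * (n.choose i : ℤ) *
          C ((m : ℤ) - ((j : ℤ) + 1) / 2) ((m : ℤ) - j) *
          C ((i : ℤ) - k + (j : ℤ) / 2) ((i : ℤ) - 2 * k + j + 1) := by
      refine Finset.sum_subset (Finset.range_subset_range.mpr (by omega)) fun j hj hj' => ?_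
      have hjm : m < j := by
        simp only [Finset.mem_range] at hj'
        omega
      rw [C_neg (a := (m:ℤ) - ((j:ℤ)+1)/2) (by omega), mul_zero, zero_mul]
    rw [pad, sum_range_double (m+1), Finset.sum_add_distrib]
    have heven : ∀ t ∈ range (m+1),
        ((if Even (2*t) then 1 else 0) + (if Odd (2*t) ∧ i = n then 1 else 0) : ℤ) *
          (-1) ^ ((i + 1) * (2*t + 1)) * (n.choose i : ℤ) *
          C ((m : ℤ) - (((2*t:ℕ) : ℤ) + 1) / 2) ((m : ℤ) - (2*t:ℕ)) *
          C ((i : ℤ) - k + ((2*t:ℕ) : ℤ) / 2) ((i : ℤ) - 2 * k + (2*t:ℕ) + 1)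
        = (-1)^(i+1) * (n.choose i : ℤ) *
          (C ((m:ℤ) - t) ((m:ℤ) - 2*t) * C ((i:ℤ) - k + t) ((i:ℤ) - 2*k + 2*t + 1)) := by
      intro t _
      have he : (if Even (2*t) then (1:ℤ) else 0) = 1 := if_pos (even_two_mul t)
      have ho : (if Odd (2*t) ∧ i = n then (1:ℤ) else 0) = 0 := by
        rw [if_neg]
        rintro ⟨h1, -⟩
        rw [Nat.odd_iff] at h1
        omega
      have hsign : ((-1:ℤ))^((i+1)*(2*t+1)) = (-1)^(i+1) := by
        rw [show (i+1)*(2*t+1) = (i+1) + 2*((i+1)*t) by ring, pow_add, pow_mul, neg_one_sq,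
          one_pow, mul_one]
      rw [he, ho, hsign]
      push_cast
      rw [show ((2*(t:ℤ)+1))/2 = (t:ℤ) by omega, show (2*(t:ℤ))/2 = (t:ℤ) by omega]
      ring
    have hodd : (∑ t ∈ range (m+1),
        ((if Even (2*t+1) then 1 else 0) + (if Odd (2*t+1) ∧ i = n then 1 else 0) : ℤ) *
          (-1) ^ ((i + 1) * (2*t+1 + 1)) * (n.choose i : ℤ) *
          C ((m : ℤ) - (((2*t+1:ℕ) : ℤ) + 1) / 2) ((m : ℤ) - (2*t+1:ℕ)) *
          C ((i : ℤ) - k + ((2*t+1:ℕ) : ℤ) / 2) ((i : ℤ) - 2 * k + (2*t+1:ℕ) + 1))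
        = (if i = n then A (m-1) ((n:ℤ)-1) ((k:ℤ)-1) else 0) := by
      by_cases hin : i = n
      · subst hin
        rw [if_pos rfl]
        have hterm : ∀ t ∈ range (m+1),
            ((if Even (2*t+1) then 1 else 0) + (if Odd (2*t+1) ∧ i = i then 1 else 0) : ℤ) *
              (-1) ^ ((i + 1) * (2*t+1 + 1)) * (i.choose i : ℤ) *
              C ((m : ℤ) - (((2*t+1:ℕ) : ℤ) + 1) / 2) ((m : ℤ) - (2*t+1:ℕ)) *
              C ((i : ℤ) - k + ((2*t+1:ℕ) : ℤ) / 2) ((i : ℤ) - 2 * k + (2*t+1:ℕ) + 1)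
            = C ((m:ℤ) - t - 1) ((m:ℤ) - 2*t - 1) *
              C ((i:ℤ) - k + t) ((i:ℤ) - 2*k + 2*t + 2) := by
          intro t _
          have he : (if Even (2*t+1) then (1:ℤ) else 0) = 0 := by
            rw [if_neg]
            rw [Nat.even_iff]
            omega
          have ho : (if Odd (2*t+1) ∧ i = i then (1:ℤ) else 0) = 1 :=
            if_pos ⟨by rw [Nat.odd_iff]; omega, rfl⟩
          have hsign : ((-1:ℤ))^((i+1)*(2*t+1+1)) = 1 := by
            rw [show (i+1)*(2*t+1+1) = 2*((i+1)*(t+1)) by ring, pow_mul, neg_one_sq, one_pow]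
          rw [he, ho, hsign, Nat.choose_self]
          push_cast
          rw [show ((2*(t:ℤ)+1)+1)/2 = (t:ℤ)+1 by omega,
            show (2*(t:ℤ)+1)/2 = (t:ℤ) by omega]
          have c1 : C ((m:ℤ) - ((t:ℤ)+1)) ((m:ℤ) - (2*(t:ℤ)+1)) = C ((m:ℤ) - t - 1) ((m:ℤ) - 2*t - 1) := by
            congr 1 <;> ring
          have c2 : C ((i:ℤ) - k + t) ((i:ℤ) - 2*k + (2*(t:ℤ)+1) + 1) = C ((i:ℤ) - k + t) ((i:ℤ) - 2*k + 2*t + 2) := by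
            congr 1
            ring
          rw [c1, c2]
          ring
        rw [Finset.sum_congr rfl hterm, Finset.sum_range_succ]
        rw [C_neg (a := (m:ℤ) - m - 1) (by omega), zero_mul, add_zero]
        unfold A
        rw [show m - 1 + 1 = m by omega]
        refine (Finset.sum_congr rfl fun t _ => ?_).symm
        have hc : ((m-1:ℕ):ℤ) = (m:ℤ) - 1 := by omega
        rw [hc]
        congr 1 <;> congr 1 <;> ring
      · rw [if_neg hin]
        refine Finset.sum_eq_zero fun t _ => ?_
        have he : (if Even (2*t+1) then (1:ℤ) else 0) = 0 := by
          rw [if_neg]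
          rw [Nat.even_iff]
          omega
        have ho : (if Odd (2*t+1) ∧ i = n then (1:ℤ) else 0) = 0 := by
          rw [if_neg]
          rintro ⟨-, h⟩
          exact hin h
        rw [he, ho]
        norm_num
    rw [Finset.sum_congr rfl heven, ← Finset.mul_sum, hodd]
    congr 1
  rw [Finset.sum_congr rfl inner, Finset.sum_add_distrib, Finset.sum_ite_eq' (range (n+1)) n
    (fun _ => A (m-1) ((n:ℤ)-1) ((k:ℤ)-1)), if_pos (Finset.self_mem_range_succ n)]
  rw [add_comm]
  congr 1

theorem binom_identity_4 (m n k : ℕ) (hm : 1 ≤ m) (hn : 1 ≤ n) (hk : 1 ≤ k) :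
    C ((m : ℤ) + n - k) ((k : ℤ) - 1) =
      ∑ i ∈ range (n + 1), ∑ j ∈ range (m + 1),
        ((if Even j then 1 else 0) + (if Odd j ∧ i = n then 1 else 0) : ℤ) *
          (-1) ^ ((i + 1) * (j + 1)) * (n.choose i : ℤ) *
          C ((m : ℤ) - ((j : ℤ) + 1) / 2) ((m : ℤ) - j) *
          C ((i : ℤ) - k + (j : ℤ) / 2) ((i : ℤ) - 2 * k + j + 1) := by
  rw [reorg m n k hm, key k m n hm hn]
end

section
/- For all integers m, n, r ≥ 0, in ℤ[q]: L_q^{(r)}(m+n) = Σ_{i=0}^{n} Σ_{j=0}^{m} q^{i(j+m+2r)} · [j+m+2r]_q^{⟨n-i⟩} · qbinom(n,i) · L_q^{(r)}(m,j) · L_q(i), where L_q(i) = Σ_{k=0}^{i} L_q(i,k). -/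
open Finset Polynomial

/-- The q-integer [n]_q = 1 + q + ⋯ + q^{n-1} in ℤ[q]. -/
noncomputable def qint (n : ℕ) : Polynomial ℤ := ∑ i ∈ range n, X ^ i

/-- The q-rising factorial [n]_q^{⟨m⟩} = ∏_{i=n}^{n+m-1} [i]_q. -/
noncomputable def qrise (n m : ℕ) : Polynomial ℤ := ∏ i ∈ range m, qint (n + i)

/-- The q-binomial coefficient. -/
noncomputable def qbinom : ℕ → ℕ → Polynomial ℤ
  | _, 0 => 1
  | 0, _ + 1 => 0
  | n + 1, k + 1 => qbinom n k + X ^ (k + 1) * qbinom n (k + 1)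

/-- The q-Lah numbers (natural-number index version). -/
noncomputable def qLahNat : ℕ → ℕ → Polynomial ℤ
  | 0, 0 => 1
  | 0, _ + 1 => 0
  | _ + 1, 0 => 0
  | n + 1, k + 1 => X ^ (n + k) * qLahNat n k + qint (n + k + 1) * qLahNat n (k + 1)

/-- The q-Lah numbers, vanishing for negative second index. -/
noncomputable def qLah (n : ℕ) (k : ℤ) : Polynomial ℤ :=
  if 0 ≤ k then qLahNat n k.toNat else 0

/-- Sum of the q-Lah numbers: L_q(n) = Σ_{k=0}^{n} L_q(n,k). -/
noncomputable def qLahSum (n : ℕ) : Polynomial ℤ := ∑ k ∈ range (n + 1), qLah n (k : ℤ)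

/-- The q-r-Lah numbers. -/
noncomputable def qrLah (r n : ℕ) (k : ℤ) : Polynomial ℤ :=
  ∑ i ∈ range (n + 1), X ^ (r * (2 * i + r - 1)) * qrise (2 * r) (n - i) * qbinom n i *
    qLah i k

/-- Sum of the q-r-Lah numbers: L_q^{(r)}(n) = Σ_{k=0}^{n} L_q^{(r)}(n,k). -/
noncomputable def qrLahSum (r n : ℕ) : Polynomial ℤ :=
  ∑ k ∈ range (n + 1), qrLah r n (k : ℤ)

lemma qint_add (a b : ℕ) : qint (a + b) = qint a + X ^ a * qint b := by
  simp [qint, Finset.sum_range_add, Finset.mul_sum, pow_add]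

lemma qrise_succ (b m : ℕ) : qrise b (m + 1) = qrise b m * qint (b + m) := by
  simp [qrise, Finset.prod_range_succ]

lemma qbinom_succ (n k : ℕ) :
    qbinom (n + 1) (k + 1) = qbinom n k + X ^ (k + 1) * qbinom n (k + 1) := by
  rw [qbinom]

lemma qbinom_zero_right (n : ℕ) : qbinom n 0 = 1 := by
  cases n <;> simp [qbinom]

lemma qbinom_eq_zero : ∀ {n k : ℕ}, n < k → qbinom n k = 0 := by
  intro n
  induction n with
  | zero => intro k h; match k, h with | k+1, _ => simp [qbinom]
  | succ n ih =>
    intro k h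
    match k, h with
    | k+1, h =>
      rw [qbinom_succ, ih (by omega), ih (by omega)]
      simp

lemma qbinom_one (n : ℕ) : qbinom n 1 = qint n := by
  induction n with
  | zero => simp [qbinom, qint]
  | succ n ih =>
    rw [qbinom, qbinom_zero_right, ih]
    rw [show n + 1 = 1 + n from by ring, qint_add]
    simp [qint]

lemma qbinom_succ_succ' : ∀ (n k : ℕ), k ≤ n →
    qbinom (n + 1) (k + 1) = X ^ (n - k) * qbinom n k + qbinom n (k + 1) := by
  intro n
  induction n with
  | zero => intro k h; interval_cases k; simp [qbinom]
  | succ n ih =>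
    intro k h
    match k with
    | 0 =>
      simp only [Nat.zero_add, Nat.sub_zero, qbinom_zero_right, mul_one, qbinom_one]
      rw [qint_add (n + 1) 1]
      simp only [qint, Finset.sum_range_one, pow_zero, mul_one]
      ring
    | k + 1 =>
      rcases Nat.lt_or_ge (k + 1) (n + 1) with hk | hk
      · obtain ⟨d, rfl⟩ : ∃ d, n = k + 1 + d := ⟨n - (k + 1), by omega⟩
        rw [qbinom_succ]
        conv_rhs => rw [qbinom_succ (k + 1 + d) k, qbinom_succ (k + 1 + d) (k + 1)]
        rw [ih k (by omega), ih (k + 1) (by omega)]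
        rw [show k + 1 + d - k = d + 1 from by omega,
            show k + 1 + d - (k + 1) = d from by omega,
            show k + 1 + d + 1 - (k + 1) = d + 1 from by omega]
        rw [pow_succ]
        ring
      · obtain rfl : k = n := by omega
        rw [qbinom_succ, qbinom_eq_zero (show k + 1 < k + 1 + 1 by omega)]
        simp [Nat.sub_self]

lemma qLahNat_succ (n k : ℕ) : qLahNat (n + 1) (k + 1)
    = X ^ (n + k) * qLahNat n k + qint (n + k + 1) * qLahNat n (k + 1) := by
  rw [qLahNat]

lemma qLahNat_eq_zero : ∀ {n k : ℕ}, n < k → qLahNat n k = 0 := by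
  intro n
  induction n with
  | zero => intro k h; match k, h with | k+1, _ => simp [qLahNat]
  | succ n ih =>
    intro k h
    match k, h with
    | k+1, h =>
      rw [qLahNat_succ, ih (by omega), ih (by omega)]
      simp

lemma qLah_neg (n : ℕ) {k : ℤ} (h : k < 0) : qLah n k = 0 := by
  simp [qLah, not_le.mpr h]

lemma qLah_gt (n : ℕ) {k : ℤ} (h : (n : ℤ) < k) : qLah n k = 0 := by
  unfold qLah
  split_ifs with h0
  · exact qLahNat_eq_zero (by omega)
  · rfl

lemma qLah_zero_left (k : ℤ) : qLah 0 k = if k = 0 then 1 else 0 := by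
  unfold qLah
  split_ifs with h0 h1 h2
  · rw [show k.toNat = 0 from by omega]; rfl
  · have : ∃ t, k.toNat = t + 1 := ⟨k.toNat - 1, by omega⟩
    obtain ⟨t, ht⟩ := this
    rw [ht]; simp [qLahNat]
  · omega
  · rfl

lemma qLah_succ (n : ℕ) (k : ℤ) : qLah (n + 1) k
    = X ^ (n + (k - 1).toNat) * qLah n (k - 1) + qint (n + k.toNat) * qLah n k := by
  rcases lt_trichotomy k 0 with hk | hk | hk
  · rw [qLah_neg _ hk, qLah_neg _ (by omega : k - 1 < 0), qLah_neg _ hk]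
    simp
  · subst hk
    rw [qLah_neg _ (by omega : (0:ℤ) - 1 < 0)]
    show qLah (n + 1) 0 = _ + qint (n + (0:ℤ).toNat) * qLah n 0
    have h1 : qLah (n + 1) 0 = 0 := by
      unfold qLah; simp [qLahNat]
    have h2 : qint (n + (0:ℤ).toNat) * qLah n 0 = 0 := by
      cases n with
      | zero => simp [qint]
      | succ m => unfold qLah; simp [qLahNat]
    rw [h1, h2]
    simp
  · obtain ⟨j, rfl⟩ : ∃ j : ℕ, k = (j : ℤ) + 1 := ⟨k.toNat - 1, by omega⟩
    have e1 : ((j : ℤ) + 1 - 1) = (j : ℤ) := by ring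
    rw [e1]
    unfold qLah
    rw [if_pos (by omega), if_pos (by omega), if_pos (by omega)]
    rw [show ((j : ℤ) + 1).toNat = j + 1 from by omega, show (j : ℤ).toNat = j from by omega]
    exact qLahNat_succ n j

noncomputable def G (b n : ℕ) (k : ℤ) : Polynomial ℤ :=
  ∑ i ∈ range (n + 1), X ^ (i * b) * qrise b (n - i) * qbinom n i * qLah i k

lemma G_neg (b n : ℕ) {k : ℤ} (h : k < 0) : G b n k = 0 := by
  unfold G
  refine Finset.sum_eq_zero fun i _ => ?_
  rw [qLah_neg _ h, mul_zero]

lemma G_gt (b n : ℕ) {k : ℤ} (h : (n : ℤ) < k) : G b n k = 0 := by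
  unfold G
  refine Finset.sum_eq_zero fun i hi => ?_
  rw [qLah_gt _ (by simp only [Finset.mem_range] at hi; omega), mul_zero]

lemma G_zero_left (b : ℕ) (k : ℤ) : G b 0 k = if k = 0 then 1 else 0 := by
  unfold G
  rw [Finset.sum_range_one]
  simp [qrise, qbinom_zero_right, qLah_zero_left]

lemma G_succ (b s : ℕ) (k : ℤ) : G b (s + 1) k
    = X ^ (s + b + (k - 1).toNat) * G b s (k - 1) + qint (s + b + k.toNat) * G b s k := by
  have key : ∀ i ∈ range (s + 1),
      (X ^ ((i + 1) * b) * qrise b (s - i) * (X ^ (s - i) * qbinom s i) * qLah (i + 1) k)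
      + (X ^ (i * b) * (qrise b (s - i) * qint (b + (s - i))) * qbinom s i * qLah i k)
      = X ^ (s + b + (k - 1).toNat) * (X ^ (i * b) * qrise b (s - i) * qbinom s i * qLah i (k - 1))
      + qint (s + b + k.toNat) * (X ^ (i * b) * qrise b (s - i) * qbinom s i * qLah i k) := by
    intro i hi
    rw [Finset.mem_range] at hi
    obtain ⟨d, rfl⟩ : ∃ d, s = i + d := ⟨s - i, by omega⟩
    rw [show i + d - i = d from by omega]
    rw [qLah_succ i k]
    have eexp : (X : Polynomial ℤ) ^ ((i + 1) * b) * X ^ d * X ^ (i + (k - 1).toNat)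
        = X ^ (i + d + b + (k - 1).toNat) * X ^ (i * b) := by
      rw [← pow_add, ← pow_add, ← pow_add]
      congr 1
      ring
    have eint : (X : Polynomial ℤ) ^ ((i + 1) * b) * X ^ d * qint (i + k.toNat)
        + X ^ (i * b) * qint (b + d)
        = qint (i + d + b + k.toNat) * X ^ (i * b) := by
      have : i + d + b + k.toNat = (b + d) + (i + k.toNat) := by ring
      rw [this, qint_add (b + d) (i + k.toNat)]
      rw [show (i + 1) * b = i * b + b from by ring]
      rw [pow_add]
      ring
    calc (X ^ ((i + 1) * b) * qrise b d * (X ^ d * qbinom (i + d) i) *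
            (X ^ (i + (k - 1).toNat) * qLah i (k - 1) + qint (i + k.toNat) * qLah i k))
        + (X ^ (i * b) * (qrise b d * qint (b + d)) * qbinom (i + d) i * qLah i k)
        = (X ^ ((i + 1) * b) * X ^ d * X ^ (i + (k - 1).toNat)) *
            (qrise b d * qbinom (i + d) i * qLah i (k - 1))
          + (X ^ ((i + 1) * b) * X ^ d * qint (i + k.toNat) + X ^ (i * b) * qint (b + d)) *
            (qrise b d * qbinom (i + d) i * qLah i k) := by ring
      _ = _ := by rw [eexp, eint]; ring
  unfold G
  rw [Finset.sum_range_succ' (fun i => X ^ (i * b) * qrise b (s + 1 - i) * qbinom (s + 1) i *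
      qLah i k) (s + 1)]
  have step1 : ∀ i ∈ range (s + 1),
      X ^ ((i + 1) * b) * qrise b (s + 1 - (i + 1)) * qbinom (s + 1) (i + 1) * qLah (i + 1) k
      = (X ^ ((i + 1) * b) * qrise b (s - i) * (X ^ (s - i) * qbinom s i) * qLah (i + 1) k)
        + (X ^ ((i + 1) * b) * qrise b (s - i) * qbinom s (i + 1) * qLah (i + 1) k) := by
    intro i hi
    rw [Finset.mem_range] at hi
    rw [show s + 1 - (i + 1) = s - i from by omega, qbinom_succ_succ' s i (by omega)]
    ring
  rw [Finset.sum_congr rfl step1, Finset.sum_add_distrib]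
  -- now : (∑ P) + (∑ R) + F0  where F0 is the i = 0 term
  have hF0 : X ^ (0 * b) * qrise b (s + 1 - 0) * qbinom (s + 1) 0 * qLah 0 k
      = X ^ (0 * b) * qrise b (s + 1 - 0) * qbinom s 0 * qLah 0 k := by
    rw [qbinom_zero_right, qbinom_zero_right]
  have hRF : (∑ i ∈ range (s + 1),
        X ^ ((i + 1) * b) * qrise b (s - i) * qbinom s (i + 1) * qLah (i + 1) k)
      + X ^ (0 * b) * qrise b (s + 1 - 0) * qbinom s 0 * qLah 0 k
      = ∑ i ∈ range (s + 1), X ^ (i * b) * (qrise b (s - i) * qint (b + (s - i))) *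
          qbinom s i * qLah i k := by
    have := (Finset.sum_range_succ' (fun i => X ^ (i * b) * qrise b (s + 1 - i) * qbinom s i *
        qLah i k) (s + 1)).symm
    simp only [show ∀ i, s + 1 - (i + 1) = s - i from fun i => by omega] at this
    rw [this, Finset.sum_range_succ]
    rw [qbinom_eq_zero (show s < s + 1 by omega)]
    rw [mul_zero, zero_mul, add_zero]
    refine Finset.sum_congr rfl fun i hi => ?_
    rw [Finset.mem_range] at hi
    rw [show s + 1 - i = (s - i) + 1 from by omega, qrise_succ]
  rw [add_assoc, hF0, hRF, ← Finset.sum_add_distrib, Finset.sum_congr rfl key,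
    Finset.sum_add_distrib, ← Finset.mul_sum, ← Finset.mul_sum]

lemma G_add (b m : ℕ) : ∀ (n : ℕ) (k : ℤ), G b (m + n) k
    = ∑ j ∈ range (m + 1), G b m (j : ℤ) * G (j + m + b) n (k - (j : ℤ)) := by
  intro n
  induction n with
  | zero =>
    intro k
    rw [Nat.add_zero]
    have hterm : ∀ j ∈ range (m + 1),
        G b m (j : ℤ) * G (j + m + b) 0 (k - (j : ℤ))
        = if j = k.toNat ∧ 0 ≤ k then G b m (j : ℤ) else 0 := by
      intro j hj
      rw [G_zero_left]
      split_ifs with h1 h2 h2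
      · rw [mul_one]
      · exact absurd (by omega : k - (j:ℤ) ≠ 0) (not_not.mpr h1)
      · omega
      · rw [mul_zero]
    rw [Finset.sum_congr rfl hterm]
    by_cases hk : 0 ≤ k ∧ k ≤ (m : ℤ)
    · obtain ⟨hk0, hkm⟩ := hk
      have hsimp : ∀ j ∈ range (m + 1), (if j = k.toNat ∧ 0 ≤ k then G b m (j : ℤ) else 0)
          = if j = k.toNat then G b m (j : ℤ) else 0 := by
        intro j _
        split_ifs with h1 h2 h2 <;> first | rfl | omega | exact absurd ⟨h2, hk0⟩ h1
      rw [Finset.sum_congr rfl hsimp, Finset.sum_ite_eq' (range (m + 1)) k.toNat]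
      rw [if_pos (Finset.mem_range.mpr (by omega))]
      rw [show ((k.toNat : ℤ)) = k from by omega]
    · have : k < 0 ∨ (m : ℤ) < k := by omega
      have hz : G b m k = 0 := by
        rcases this with h | h
        · exact G_neg b m h
        · exact G_gt b m h
      rw [hz]
      refine (Finset.sum_eq_zero fun j hj => ?_).symm
      rw [Finset.mem_range] at hj
      rw [if_neg (by omega)]
  | succ n ih =>
    intro k
    rw [show m + (n + 1) = (m + n) + 1 from by omega, G_succ, ih (k - 1), ih k,
      Finset.mul_sum, Finset.mul_sum, ← Finset.sum_add_distrib]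
    refine Finset.sum_congr rfl fun j hj => ?_
    rw [Finset.mem_range] at hj
    rw [G_succ (j + m + b) n (k - (j : ℤ))]
    have e1 : X ^ (m + n + b + (k - 1).toNat) * (G b m (j:ℤ) * G (j + m + b) n (k - 1 - (j:ℤ)))
        = G b m (j:ℤ) * (X ^ (n + (j + m + b) + (k - (j:ℤ) - 1).toNat) *
            G (j + m + b) n (k - (j:ℤ) - 1)) := by
      by_cases h : k - (j : ℤ) - 1 < 0
      · rw [G_neg _ _ h, G_neg _ _ (show k - 1 - (j:ℤ) < 0 from by omega)]
        ring
      · rw [show k - 1 - (j:ℤ) = k - (j:ℤ) - 1 from by ring,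
          show m + n + b + (k - 1).toNat = n + (j + m + b) + (k - (j:ℤ) - 1).toNat from by omega]
        ring
    have e2 : qint (m + n + b + k.toNat) * (G b m (j:ℤ) * G (j + m + b) n (k - (j:ℤ)))
        = G b m (j:ℤ) * (qint (n + (j + m + b) + (k - (j:ℤ)).toNat) *
            G (j + m + b) n (k - (j:ℤ))) := by
      by_cases h : k - (j : ℤ) < 0
      · rw [G_neg _ _ h]
        ring
      · rw [show m + n + b + k.toNat = n + (j + m + b) + (k - (j:ℤ)).toNat from by omega]
        ring
    rw [e1, e2, ← mul_add]

lemma qrLah_via_G (r n : ℕ) (k : ℤ) : qrLah r n k = X ^ (r * (r - 1)) * G (2 * r) n k := by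
  unfold qrLah G
  rw [Finset.mul_sum]
  refine Finset.sum_congr rfl fun i _ => ?_
  have he : r * (2 * i + r - 1) = r * (r - 1) + i * (2 * r) := by
    cases r with
    | zero => simp
    | succ t =>
      rw [show 2 * i + (t + 1) - 1 = 2 * i + t from by omega,
        show t + 1 - 1 = t from by omega]
      ring
  rw [he, pow_add]
  ring

lemma sum_shift (c j n m : ℕ) (hj : j ≤ m) :
    ∑ k ∈ range (m + n + 1), G c n ((k : ℤ) - (j : ℤ))
      = ∑ t ∈ range (n + 1), G c n (t : ℤ) := by
  obtain ⟨d, rfl⟩ : ∃ d, m = j + d := ⟨m - j, by omega⟩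
  rw [show j + d + n + 1 = j + ((n + 1) + d) from by omega]
  rw [Finset.sum_range_add, Finset.sum_range_add]
  have h1 : ∑ k ∈ range j, G c n ((k : ℤ) - (j : ℤ)) = 0 := by
    refine Finset.sum_eq_zero fun k hk => ?_
    rw [Finset.mem_range] at hk
    exact G_neg _ _ (by omega)
  have h3 : ∑ k ∈ range d, G c n ((((j + (n + 1 + k)) : ℕ) : ℤ) - (j : ℤ)) = 0 := by
    refine Finset.sum_eq_zero fun k hk => ?_
    exact G_gt _ _ (by push_cast; omega)
  rw [h1, h3, zero_add, add_zero]
  refine Finset.sum_congr rfl fun t ht => ?_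
  congr 1
  push_cast
  ring

lemma sum_qLah_ext (i n : ℕ) (hi : i ≤ n) :
    ∑ t ∈ range (n + 1), qLah i (t : ℤ) = qLahSum i := by
  obtain ⟨e, rfl⟩ : ∃ e, n = i + e := ⟨n - i, by omega⟩
  rw [show i + e + 1 = (i + 1) + e from by omega, Finset.sum_range_add]
  have h2 : ∑ k ∈ range e, qLah i (((i + 1 + k : ℕ) : ℤ)) = 0 := by
    refine Finset.sum_eq_zero fun k hk => ?_
    exact qLah_gt _ (by push_cast; omega)
  rw [h2, add_zero, qLahSum]

theorem qrLahSum_add (m n r : ℕ) :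
    qrLahSum r (m + n) =
      ∑ i ∈ range (n + 1), ∑ j ∈ range (m + 1),
        X ^ (i * (j + m + 2 * r)) * qrise (j + m + 2 * r) (n - i) * qbinom n i *
          qrLah r m (j : ℤ) * qLahSum i := by
  unfold qrLahSum
  calc ∑ k ∈ range (m + n + 1), qrLah r (m + n) (k : ℤ)
      = ∑ k ∈ range (m + n + 1), ∑ j ∈ range (m + 1),
          qrLah r m (j : ℤ) * G (j + m + 2 * r) n ((k : ℤ) - (j : ℤ)) := by
        refine Finset.sum_congr rfl fun k _ => ?_
        rw [qrLah_via_G, G_add (2 * r) m n, Finset.mul_sum]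
        refine Finset.sum_congr rfl fun j _ => ?_
        rw [qrLah_via_G]
        ring
    _ = ∑ j ∈ range (m + 1), qrLah r m (j : ℤ) *
          ∑ k ∈ range (m + n + 1), G (j + m + 2 * r) n ((k : ℤ) - (j : ℤ)) := by
        rw [Finset.sum_comm]
        exact Finset.sum_congr rfl fun j _ => by rw [Finset.mul_sum]
    _ = ∑ j ∈ range (m + 1), qrLah r m (j : ℤ) *
          ∑ t ∈ range (n + 1), G (j + m + 2 * r) n (t : ℤ) := by
        refine Finset.sum_congr rfl fun j hj => ?_
        rw [Finset.mem_range] at hj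
        rw [sum_shift _ _ _ _ (by omega)]
    _ = ∑ j ∈ range (m + 1), qrLah r m (j : ℤ) *
          ∑ i ∈ range (n + 1), X ^ (i * (j + m + 2 * r)) * qrise (j + m + 2 * r) (n - i) *
            qbinom n i * qLahSum i := by
        refine Finset.sum_congr rfl fun j _ => ?_
        congr 1
        unfold G
        rw [Finset.sum_comm]
        refine Finset.sum_congr rfl fun i hi => ?_
        rw [Finset.mem_range] at hi
        rw [← Finset.mul_sum, sum_qLah_ext i n (by omega)]
    _ = _ := by
        simp_rw [Finset.mul_sum]
        rw [Finset.sum_comm]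
        refine Finset.sum_congr rfl fun i _ => Finset.sum_congr rfl fun j _ => ?_
        ring
end
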